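/- Let n, d be natural numbers, let V be a finite linearly independent subset of ℝ^d, let V* = V ∪ {0}, let λ ∈ (0,1) with λ ≠ 1/2, and let μ ∈ (0,1). Let e_A, e_B, e'_A, e'_B be binary n×n matrices and let v_A, v_B, v'_A, v'_B be n×d matrices with rows in V*. Assume (e_A, v_A) ≠ (e_B, v_B). If μ·e'_A + (1−μ)·e'_B = λ·e_A + (1−λ)·e_B and μ·v'_A + (1−μ)·v'_B = λ·v_A + (1−λ)·v_B, then either (μ = λ, e'_A = e_A, e'_B = e_B, v'_A = v_A, v'_B = v_B) or (μ = 1−λ, e'_A = e_B, e'_B = e_A, v'_A = v_B, v'_B = v_A). In other words, the two original node-featured graphs (v_A, e_A) and (v_B, e_B), together with the mixing ratio λ, are uniquely recovered (up to the swap λ ↔ 1−λ) from the mixed graph. -/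

import Mathlib

/-- A binary matrix: every entry is 0 or 1. -/
def IsBinary {n : ℕ} (e : Matrix (Fin n) (Fin n) ℝ) : Prop :=
  ∀ i j, e i j = 0 ∨ e i j = 1

section Aux

variable {d : ℕ} {V : Set (Fin d → ℝ)}

private lemma scalar_uniq {lam a b a' b' : ℝ} (h0 : 0 < lam) (h1 : lam < 1) (hhalf : lam ≠ 1/2)
    (ha : a = 0 ∨ a = 1) (hb : b = 0 ∨ b = 1) (ha' : a' = 0 ∨ a' = 1) (hb' : b' = 0 ∨ b' = 1)
    (h : lam * a' + (1 - lam) * b' = lam * a + (1 - lam) * b) : a' = a ∧ b' = b := by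
  have h2 : lam ≠ 1 - lam := by intro h; apply hhalf; linarith
  rcases ha with rfl|rfl <;> rcases hb with rfl|rfl <;> rcases ha' with rfl|rfl <;>
    rcases hb' with rfl|rfl <;> norm_num <;>
    first
      | linarith
      | (exfalso; apply h2; linarith)

private lemma scalar_detect {lam mu a b a' b' : ℝ} (h0 : 0 < lam) (h1 : lam < 1)
    (ha : a = 0 ∨ a = 1) (hb : b = 0 ∨ b = 1) (ha' : a' = 0 ∨ a' = 1) (hb' : b' = 0 ∨ b' = 1)
    (hab : a ≠ b)
    (h : mu * a' + (1 - mu) * b' = lam * a + (1 - lam) * b) : mu = lam ∨ mu = 1 - lam := by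
  rcases ha with rfl|rfl <;> rcases hb with rfl|rfl <;> rcases ha' with rfl|rfl <;>
    rcases hb' with rfl|rfl <;> norm_num at hab <;> norm_num at h <;>
    first
      | (left; linarith)
      | (right; linarith)
      | linarith

private lemma repr_lem [Fintype V] (h0V : (0 : Fin d → ℝ) ∉ V) {x : Fin d → ℝ}
    (hx : x ∈ V ∪ {0}) :
    x = ∑ v : V, (if x = ↑v then (1:ℝ) else 0) • (v : Fin d → ℝ) := by
  rcases hx with hx | hx
  · have key : ∀ v : V, (x = ↑v) ↔ (v = ⟨x, hx⟩) := fun v => by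
      constructor
      · intro h; exact Subtype.ext h.symm
      · intro h; subst h; rfl
    simp only [key]
    simp [ite_smul, Finset.sum_ite_eq']
  · simp only [Set.mem_singleton_iff] at hx
    subst hx
    have : ∀ v : V, ((0 : Fin d → ℝ) = ↑v) ↔ False := fun v => by
      simp only [iff_false]; intro h; exact h0V (h ▸ v.2)
    simp [this]

private lemma coeff_lem [Fintype V]
    (hVli : LinearIndependent ℝ (fun u : V => (u : Fin d → ℝ)))
    {α β γ δ : ℝ} {x y x' y' : Fin d → ℝ}
    (hx : x ∈ V ∪ {0}) (hy : y ∈ V ∪ {0}) (hx' : x' ∈ V ∪ {0}) (hy' : y' ∈ V ∪ {0})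
    (h : α • x' + β • y' = γ • x + δ • y) :
    ∀ v : V, α * (if x' = ↑v then (1:ℝ) else 0) + β * (if y' = ↑v then 1 else 0)
      = γ * (if x = ↑v then (1:ℝ) else 0) + δ * (if y = ↑v then 1 else 0) := by
  have h0V : (0 : Fin d → ℝ) ∉ V := fun h0 => hVli.ne_zero ⟨0, h0⟩ rfl
  have g0 : ∑ v : V, ((α * (if x' = ↑v then (1:ℝ) else 0) + β * (if y' = ↑v then 1 else 0))
      - (γ * (if x = ↑v then (1:ℝ) else 0) + δ * (if y = ↑v then 1 else 0))) • (v : Fin d → ℝ)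
      = 0 := by
    simp only [sub_smul, add_smul, mul_smul, Finset.sum_sub_distrib, Finset.sum_add_distrib]
    rw [← Finset.smul_sum, ← Finset.smul_sum, ← Finset.smul_sum, ← Finset.smul_sum]
    rw [← repr_lem h0V hx, ← repr_lem h0V hy, ← repr_lem h0V hx', ← repr_lem h0V hy']
    rw [h]; abel
  have := Fintype.linearIndependent_iff.1 hVli _ g0
  intro v
  have hv := this v
  linarith

private lemma ind_bin (x : Fin d → ℝ) (v : V) :
    (if x = ↑v then (1:ℝ) else 0) = 0 ∨ (if x = ↑v then (1:ℝ) else 0) = 1 := by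
  split_ifs <;> simp

private lemma eq_of_ind [Fintype V] (h0V : (0 : Fin d → ℝ) ∉ V) {x y : Fin d → ℝ}
    (hx : x ∈ V ∪ {0}) (hy : y ∈ V ∪ {0})
    (h : ∀ v : V, (if x = ↑v then (1:ℝ) else 0) = (if y = ↑v then 1 else 0)) : x = y := by
  rcases hx with hx | hx
  · have hxv := h ⟨x, hx⟩
    rw [if_pos rfl] at hxv
    by_cases hyx : y = (⟨x, hx⟩ : V)
    · exact hyx.symm
    · rw [if_neg hyx] at hxv; norm_num at hxv
  · simp only [Set.mem_singleton_iff] at hx; subst hx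
    rcases hy with hy | hy
    · have hyv := h ⟨y, hy⟩
      rw [if_pos rfl] at hyv
      by_cases hxy : (0 : Fin d → ℝ) = (⟨y, hy⟩ : V)
      · exact hxy
      · rw [if_neg hxy] at hyv; norm_num at hyv
    · simpa using hy.symm

private lemma ne_ind [Fintype V] (h0V : (0 : Fin d → ℝ) ∉ V) {x y : Fin d → ℝ}
    (hx : x ∈ V ∪ {0}) (hy : y ∈ V ∪ {0}) (hxy : x ≠ y) :
    ∃ v : V, (if x = ↑v then (1:ℝ) else 0) ≠ (if y = ↑v then 1 else 0) := by
  by_contra hc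
  push_neg at hc
  exact hxy (eq_of_ind h0V hx hy hc)

end Aux

/-- Theorem 1 (Intrusion-Freeness, under the condition of Lemma 2): the two
original node-featured graphs and the mixing ratio λ are uniquely recovered,
up to the swap λ ↔ 1-λ, from the mixed graph. -/
theorem stmt_15 {n d : ℕ} (V : Set (Fin d → ℝ)) (hVfin : V.Finite)
    (hVli : LinearIndependent ℝ (fun u : V => (u : Fin d → ℝ)))
    {lam : ℝ} (h0 : 0 < lam) (h1 : lam < 1) (hhalf : lam ≠ 1 / 2)
    {mu : ℝ} (hmu0 : 0 < mu) (hmu1 : mu < 1)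
    (eA eB eA' eB' : Matrix (Fin n) (Fin n) ℝ)
    (heA : IsBinary eA) (heB : IsBinary eB) (heA' : IsBinary eA') (heB' : IsBinary eB')
    (vA vB vA' vB' : Matrix (Fin n) (Fin d) ℝ)
    (hvA : ∀ i, vA i ∈ V ∪ {0}) (hvB : ∀ i, vB i ∈ V ∪ {0})
    (hvA' : ∀ i, vA' i ∈ V ∪ {0}) (hvB' : ∀ i, vB' i ∈ V ∪ {0})
    (hne : (eA, vA) ≠ (eB, vB))
    (hedge : mu • eA' + (1 - mu) • eB' = lam • eA + (1 - lam) • eB)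
    (hfeat : mu • vA' + (1 - mu) • vB' = lam • vA + (1 - lam) • vB) :
    (mu = lam ∧ eA' = eA ∧ eB' = eB ∧ vA' = vA ∧ vB' = vB) ∨
    (mu = 1 - lam ∧ eA' = eB ∧ eB' = eA ∧ vA' = vB ∧ vB' = vA) := by
  haveI : Fintype V := hVfin.fintype
  have h0V : (0 : Fin d → ℝ) ∉ V := fun hz => hVli.ne_zero ⟨0, hz⟩ rfl
  -- entrywise edge equation
  have hE : ∀ i j, mu * eA' i j + (1 - mu) * eB' i j
      = lam * eA i j + (1 - lam) * eB i j := by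
    intro i j
    have := congrFun (congrFun hedge i) j
    simpa [Matrix.add_apply, Matrix.smul_apply, smul_eq_mul] using this
  -- rowwise feature equation
  have hF : ∀ i, mu • (vA' i) + (1 - mu) • (vB' i) = lam • (vA i) + (1 - lam) • (vB i) := by
    intro i
    funext j
    have := congrFun (congrFun hfeat i) j
    simpa [Matrix.add_apply, Matrix.smul_apply, smul_eq_mul] using this
  -- indicator coefficient equations
  have hC : ∀ (i : Fin n) (v : V),
      mu * (if vA' i = ↑v then (1:ℝ) else 0) + (1 - mu) * (if vB' i = ↑v then 1 else 0)
      = lam * (if vA i = ↑v then (1:ℝ) else 0) + (1 - lam) * (if vB i = ↑v then 1 else 0) :=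
    fun i => coeff_lem hVli (hvA i) (hvB i) (hvA' i) (hvB' i) (hF i)
  -- detect that mu = lam or mu = 1 - lam
  have hdet : mu = lam ∨ mu = 1 - lam := by
    have hne' : ¬(eA = eB ∧ vA = vB) := fun ⟨ha, hb⟩ => hne (by rw [ha, hb])
    rcases not_and_or.1 hne' with hEne | hFne
    · obtain ⟨i, hi⟩ := Function.ne_iff.1 hEne
      obtain ⟨j, hj⟩ := Function.ne_iff.1 hi
      exact scalar_detect h0 h1 (heA i j) (heB i j) (heA' i j) (heB' i j) hj (hE i j)
    · obtain ⟨i, hi⟩ := Function.ne_iff.1 hFne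
      obtain ⟨v, hv⟩ := ne_ind h0V (hvA i) (hvB i) hi
      exact scalar_detect h0 h1 (ind_bin _ v) (ind_bin _ v) (ind_bin _ v) (ind_bin _ v)
        hv (hC i v)
  rcases hdet with rfl | rfl
  · left
    refine ⟨rfl, ?_, ?_, ?_, ?_⟩
    · funext i j
      exact (scalar_uniq h0 h1 hhalf (heA i j) (heB i j) (heA' i j) (heB' i j) (hE i j)).1
    · funext i j
      exact (scalar_uniq h0 h1 hhalf (heA i j) (heB i j) (heA' i j) (heB' i j) (hE i j)).2
    · funext i
      refine eq_of_ind h0V (hvA' i) (hvA i) (fun v => ?_)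
      exact (scalar_uniq h0 h1 hhalf (ind_bin _ v) (ind_bin _ v) (ind_bin _ v) (ind_bin _ v)
        (hC i v)).1
    · funext i
      refine eq_of_ind h0V (hvB' i) (hvB i) (fun v => ?_)
      exact (scalar_uniq h0 h1 hhalf (ind_bin _ v) (ind_bin _ v) (ind_bin _ v) (ind_bin _ v)
        (hC i v)).2
  · right
    refine ⟨rfl, ?_, ?_, ?_, ?_⟩
    · funext i j
      have h' : lam * eB' i j + (1 - lam) * eA' i j = lam * eA i j + (1 - lam) * eB i j := by
        have := hE i j; ring_nf at this ⊢; linarith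
      exact (scalar_uniq h0 h1 hhalf (heA i j) (heB i j) (heB' i j) (heA' i j) h').2
    · funext i j
      have h' : lam * eB' i j + (1 - lam) * eA' i j = lam * eA i j + (1 - lam) * eB i j := by
        have := hE i j; ring_nf at this ⊢; linarith
      exact (scalar_uniq h0 h1 hhalf (heA i j) (heB i j) (heB' i j) (heA' i j) h').1
    · funext i
      refine eq_of_ind h0V (hvA' i) (hvB i) (fun v => ?_)
      have h' : lam * (if vB' i = ↑v then (1:ℝ) else 0) + (1 - lam) * (if vA' i = ↑v then 1 else 0)
          = lam * (if vA i = ↑v then (1:ℝ) else 0) + (1 - lam) * (if vB i = ↑v then 1 else 0) := by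
        have := hC i v; ring_nf at this ⊢; linarith
      exact (scalar_uniq h0 h1 hhalf (ind_bin _ v) (ind_bin _ v) (ind_bin _ v) (ind_bin _ v) h').2
    · funext i
      refine eq_of_ind h0V (hvB' i) (hvA i) (fun v => ?_)
      have h' : lam * (if vB' i = ↑v then (1:ℝ) else 0) + (1 - lam) * (if vA' i = ↑v then 1 else 0)
          = lam * (if vA i = ↑v then (1:ℝ) else 0) + (1 - lam) * (if vB i = ↑v then 1 else 0) := by
        have := hC i v; ring_nf at this ⊢; linarith
      exact (scalar_uniq h0 h1 hhalf (ind_bin _ v) (ind_bin _ v) (ind_bin _ v) (ind_bin _ v) h').1
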